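/- Let G be a directed graph, let g be a graph trace on G, and let H := {v ∈ G⁰ : g(v) = 0}. Define g̃ on the vertices of the quotient graph G_{(H,∅)} by: g̃(w) := g(w) for w ∈ (G⁰ ∖ H) ∖ B_H; g̃(w) := Σ_{e : s(e)=w, r(e)∉H} g(r(e)) for w ∈ B_H; and g̃(v′) := g(v) − Σ_{e : s(e)=v, r(e)∉H} g(r(e)) for the primed copy v′ of v ∈ B_H. Then g̃ is a graph trace on G_{(H,∅)} and ‖g̃‖ = ‖g‖. -/

import Mathlib

/-- A directed graph: countable sets of vertices and edges with range and source maps. -/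
structure DirGraph where
  V : Type
  E : Type
  countV : Countable V
  countE : Countable E
  r : E → V
  s : E → V

attribute [instance] DirGraph.countV DirGraph.countE

/-- `g : G⁰ → [0,∞)` is a graph trace if (1) for every vertex emitting a finite nonzero
number of edges, `g v = ∑_{s(e)=v} g (r e)`, and (2) for every infinite emitter `v` and
every finite set of edges emitted by `v`, `∑ g (r eᵢ) ≤ g v`. -/
def DirGraph.IsGraphTrace (G : DirGraph) (g : G.V → NNReal) : Prop :=
  (∀ v : G.V, ({e : G.E | G.s e = v}).Finite → ({e : G.E | G.s e = v}).Nonempty →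
      g v = ∑ᶠ e ∈ {e : G.E | G.s e = v}, g (G.r e)) ∧
  (∀ v : G.V, ({e : G.E | G.s e = v}).Infinite →
      ∀ F : Finset G.E, (∀ e ∈ F, G.s e = v) → ∑ e ∈ F, g (G.r e) ≤ g v)

/-- `v ≥ w` : there is a directed path (possibly of length zero) from `v` to `w`. -/
def DirGraph.Reaches (G : DirGraph) : G.V → G.V → Prop :=
  Relation.ReflTransGen (fun a b => ∃ e : G.E, G.s e = a ∧ G.r e = b)

/-- `L(v)`, the set of vertices that can reach `v`. -/
def DirGraph.L (G : DirGraph) (v : G.V) : Set G.V := {w : G.V | G.Reaches w v}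

/-- A vertex is left infinite if `L(v)` is infinite. -/
def DirGraph.LeftInfinite (G : DirGraph) (v : G.V) : Prop := (G.L v).Infinite

/-- A vertex lies on a loop iff there is a directed path of length at least one
from it back to itself. -/
def DirGraph.OnLoop (G : DirGraph) (v : G.V) : Prop :=
  ∃ e : G.E, G.s e = v ∧ G.Reaches (G.r e) v

/-- A set of vertices is hereditary if it is closed under ranges of edges. -/
def DirGraph.Hereditary (G : DirGraph) (H : Set G.V) : Prop :=
  ∀ e : G.E, G.s e ∈ H → G.r e ∈ H

/-- A set of vertices is saturated if it contains every vertex emitting a finite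
nonzero number of edges all of whose ranges lie in the set. -/
def DirGraph.Saturated (G : DirGraph) (H : Set G.V) : Prop :=
  ∀ v : G.V, ({e : G.E | G.s e = v}).Finite → ({e : G.E | G.s e = v}).Nonempty →
    (∀ e : G.E, G.s e = v → G.r e ∈ H) → v ∈ H

/-- The norm `‖g‖ = ∑_{v} g v` of a function on the vertices, as an extended real. -/
noncomputable def DirGraph.traceNorm (G : DirGraph) (g : G.V → NNReal) : ENNReal :=
  ∑' v : G.V, (g v : ENNReal)


/-- The set `B_H` of infinite emitters `v` such that a finite, nonzero number of edges
from `v` have range outside `H`. -/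
def DirGraph.BH (G : DirGraph) (H : Set G.V) : Set G.V :=
  {v : G.V | ({e : G.E | G.s e = v}).Infinite ∧
    ({e : G.E | G.s e = v ∧ G.r e ∉ H}).Finite ∧
    ({e : G.E | G.s e = v ∧ G.r e ∉ H}).Nonempty}

/-- The quotient graph `G_{(H,∅)}` for a hereditary set `H`:  its vertices are the
vertices of `G` outside `H` together with a primed copy `v'` of each `v ∈ B_H`, and its
edges are the edges of `G` with range outside `H` together with a primed copy `e'` of
each edge with range in `B_H`; a primed edge `e'` has source `s e` and range `(r e)'`. -/
def DirGraph.quot (G : DirGraph) (H : Set G.V) (hH : G.Hereditary H) : DirGraph where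
  V := {v : G.V // v ∉ H} ⊕ {v : G.V // v ∈ G.BH H}
  E := {e : G.E // G.r e ∉ H} ⊕ {e : G.E // G.r e ∈ G.BH H}
  countV := inferInstance
  countE := inferInstance
  r := Sum.elim (fun e => Sum.inl ⟨G.r e.1, e.2⟩) (fun e => Sum.inr ⟨G.r e.1, e.2⟩)
  s := Sum.elim
    (fun e => Sum.inl ⟨G.s e.1, fun hs => e.2 (hH e.1 hs)⟩)
    (fun e => Sum.inl ⟨G.s e.1, fun hs => by
      obtain ⟨f, hf, hrf⟩ := e.2.2.2
      exact hrf (hH f (hf ▸ hH e.1 hs))⟩)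

open scoped Classical in
/-- The function `g̃` induced on the vertices of the quotient graph `G_{(H,∅)}` by a
function `g` on the vertices of `G`:  it is `g w` on unprimed vertices outside `B_H`,
`∑_{s(e) = w, r(e) ∉ H} g (r e)` on unprimed vertices of `B_H`, and
`g v - ∑_{s(e) = v, r(e) ∉ H} g (r e)` on the primed copy `v'` of `v ∈ B_H`. -/
noncomputable def DirGraph.gtilde (G : DirGraph) (H : Set G.V) (hH : G.Hereditary H)
    (g : G.V → NNReal) : (G.quot H hH).V → NNReal :=
  Sum.elim
    (fun w => if w.1 ∈ G.BH H then
        ∑ᶠ e ∈ {e : G.E | G.s e = w.1 ∧ G.r e ∉ H}, g (G.r e)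
      else g w.1)
    (fun v => g v.1 - ∑ᶠ e ∈ {e : G.E | G.s e = v.1 ∧ G.r e ∉ H}, g (G.r e))

namespace GtildeAux

open scoped Classical

variable {G : DirGraph} {g : G.V → NNReal}

/-- The key partial sum `S v = ∑_{s e = v, r e ∉ H} g (r e)` with `H = {v | g v = 0}`. -/
noncomputable def S (G : DirGraph) (g : G.V → NNReal) (v : G.V) : NNReal :=
  ∑ᶠ e ∈ {e : G.E | G.s e = v ∧ G.r e ∉ {v : G.V | g v = 0}}, g (G.r e)

theorem hered (hg : G.IsGraphTrace g) : G.Hereditary {v : G.V | g v = 0} := by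
  intro e he
  simp only [Set.mem_setOf_eq] at he ⊢
  by_cases hfin : ({f : G.E | G.s f = G.s e}).Finite
  · have hne : ({f : G.E | G.s f = G.s e}).Nonempty := ⟨e, rfl⟩
    have h1 := hg.1 _ hfin hne
    rw [finsum_mem_eq_finite_toFinset_sum _ hfin, he] at h1
    exact Finset.sum_eq_zero_iff.mp h1.symm e (by simp [hfin.mem_toFinset])
  · have h2 := hg.2 _ hfin {e} (by simp)
    simp only [Finset.sum_singleton, he] at h2
    exact le_antisymm h2 zero_le

theorem BH_not_mem (hH : G.Hereditary {v : G.V | g v = 0}) {v : G.V}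
    (hv : v ∈ G.BH {v : G.V | g v = 0}) : v ∉ {v : G.V | g v = 0} := by
  obtain ⟨-, -, f, hf1, hf2⟩ := hv
  exact fun hu => hf2 (hH f (by rw [hf1]; exact hu))

theorem S_le (hg : G.IsGraphTrace g) {v : G.V} (hv : v ∈ G.BH {v : G.V | g v = 0}) :
    S G g v ≤ g v := by
  obtain ⟨hinf, hfin, -⟩ := hv
  rw [S, finsum_mem_eq_finite_toFinset_sum _ hfin]
  exact hg.2 v hinf _ (fun e he => ((hfin.mem_toFinset).mp he).1)

theorem g_eq_S (hg : G.IsGraphTrace g) {v : G.V}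
    (hfin : ({e : G.E | G.s e = v}).Finite) (hne : ({e : G.E | G.s e = v}).Nonempty) :
    g v = S G g v := by
  have h1 := hg.1 v hfin hne
  have hsub : ({e : G.E | G.s e = v ∧ G.r e ∉ {v : G.V | g v = 0}}).Finite :=
    hfin.subset (fun e he => he.1)
  rw [finsum_mem_eq_finite_toFinset_sum _ hfin] at h1
  rw [S, finsum_mem_eq_finite_toFinset_sum _ hsub, h1]
  symm
  apply Finset.sum_subset
  · intro e he
    simp only [Set.Finite.mem_toFinset, Set.mem_setOf_eq] at he ⊢
    exact he.1
  · intro e he hne2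
    simp only [Set.Finite.mem_toFinset, Set.mem_setOf_eq] at he hne2
    push_neg at hne2
    exact hne2 he


noncomputable def f1 (G : DirGraph) (g : G.V → NNReal) (e : G.E) : NNReal :=
  if G.r e ∈ G.BH {v : G.V | g v = 0} then S G g (G.r e) else g (G.r e)

noncomputable def f2 (G : DirGraph) (g : G.V → NNReal) (e : G.E) : NNReal :=
  g (G.r e) - S G g (G.r e)

theorem gtilde_inl (hH : G.Hereditary {v : G.V | g v = 0})
    (e : {e : G.E // G.r e ∉ {v : G.V | g v = 0}}) :
    G.gtilde {v : G.V | g v = 0} hH g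
      ((G.quot {v : G.V | g v = 0} hH).r (Sum.inl e)) = f1 G g e.1 := rfl

theorem gtilde_inr (hH : G.Hereditary {v : G.V | g v = 0})
    (e : {e : G.E // G.r e ∈ G.BH {v : G.V | g v = 0}}) :
    G.gtilde {v : G.V | g v = 0} hH g
      ((G.quot {v : G.V | g v = 0} hH).r (Sum.inr e)) = f2 G g e.1 := rfl

theorem Sw_eq (hH : G.Hereditary {v : G.V | g v = 0}) {w : G.V}
    (hw : w ∉ {v : G.V | g v = 0}) :
    {x : (G.quot {v : G.V | g v = 0} hH).E |
        (G.quot {v : G.V | g v = 0} hH).s x = Sum.inl ⟨w, hw⟩}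
      = Sum.inl '' {e : {e : G.E // G.r e ∉ {v : G.V | g v = 0}} | G.s e.1 = w}
        ∪ Sum.inr '' {e : {e : G.E // G.r e ∈ G.BH {v : G.V | g v = 0}} | G.s e.1 = w} := by
  ext x
  erw [Set.mem_setOf_eq, Set.mem_union, Set.mem_image, Set.mem_image]
  cases x with
  | inl e =>
    simp [DirGraph.quot, Subtype.ext_iff]
    exact fun _ => e.2
  | inr e =>
    simp [DirGraph.quot, Subtype.ext_iff]
    exact fun _ => e.2


theorem val_image_T1 {w : G.V} :
    Subtype.val '' {e : {e : G.E // G.r e ∉ {v : G.V | g v = 0}} | G.s e.1 = w}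
      = {e : G.E | G.s e = w ∧ G.r e ∉ {v : G.V | g v = 0}} := by
  ext e; constructor
  · rintro ⟨x, hx, rfl⟩; exact ⟨hx, x.2⟩
  · rintro ⟨h1, h2⟩; exact ⟨⟨e, h2⟩, h1, rfl⟩

theorem val_image_T2 {w : G.V} :
    Subtype.val '' {e : {e : G.E // G.r e ∈ G.BH {v : G.V | g v = 0}} | G.s e.1 = w}
      = {e : G.E | G.s e = w ∧ G.r e ∈ G.BH {v : G.V | g v = 0}} := by
  ext e; constructor
  · rintro ⟨x, hx, rfl⟩; exact ⟨hx, x.2⟩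
  · rintro ⟨h1, h2⟩; exact ⟨⟨e, h2⟩, h1, rfl⟩

theorem A2_subset_A1 (hH : G.Hereditary {v : G.V | g v = 0}) {w : G.V} :
    {e : G.E | G.s e = w ∧ G.r e ∈ G.BH {v : G.V | g v = 0}}
      ⊆ {e : G.E | G.s e = w ∧ G.r e ∉ {v : G.V | g v = 0}} :=
  fun _ he => ⟨he.1, BH_not_mem hH he.2⟩

theorem Sw_finite_iff (hH : G.Hereditary {v : G.V | g v = 0}) {w : G.V}
    (hw : w ∉ {v : G.V | g v = 0}) :
    ({x : (G.quot {v : G.V | g v = 0} hH).E |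
        (G.quot {v : G.V | g v = 0} hH).s x = Sum.inl ⟨w, hw⟩}).Finite
      ↔ ({e : G.E | G.s e = w ∧ G.r e ∉ {v : G.V | g v = 0}}).Finite := by
  rw [Sw_eq hH hw]
  constructor
  · intro h
    have hT1 := Set.Finite.of_finite_image (h.subset Set.subset_union_left)
      (Sum.inl_injective.injOn)
    rw [← val_image_T1 (g := g) (w := w)]
    exact hT1.image _
  · intro hA1
    have hT1 : ({e : {e : G.E // G.r e ∉ {v : G.V | g v = 0}} | G.s e.1 = w}).Finite :=
      Set.Finite.of_finite_image (by rw [val_image_T1]; exact hA1)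
        (Subtype.val_injective.injOn)
    have hT2 : ({e : {e : G.E // G.r e ∈ G.BH {v : G.V | g v = 0}} | G.s e.1 = w}).Finite :=
      Set.Finite.of_finite_image (by rw [val_image_T2]; exact hA1.subset (A2_subset_A1 hH))
        (Subtype.val_injective.injOn)
    exact (hT1.image _).union (hT2.image _)

theorem key_sum (hg : G.IsGraphTrace g) (hH : G.Hereditary {v : G.V | g v = 0}) {w : G.V}
    (hw : w ∉ {v : G.V | g v = 0})
    (hA1 : ({e : G.E | G.s e = w ∧ G.r e ∉ {v : G.V | g v = 0}}).Finite) :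
    (∑ᶠ x ∈ {x : (G.quot {v : G.V | g v = 0} hH).E |
        (G.quot {v : G.V | g v = 0} hH).s x = Sum.inl ⟨w, hw⟩},
      G.gtilde {v : G.V | g v = 0} hH g ((G.quot {v : G.V | g v = 0} hH).r x)) = S G g w := by
  have hA2 : ({e : G.E | G.s e = w ∧ G.r e ∈ G.BH {v : G.V | g v = 0}}).Finite :=
    hA1.subset (A2_subset_A1 hH)
  have hT1 : ({e : {e : G.E // G.r e ∉ {v : G.V | g v = 0}} | G.s e.1 = w}).Finite :=
    Set.Finite.of_finite_image (by rw [val_image_T1]; exact hA1) (Subtype.val_injective.injOn)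
  have hT2 : ({e : {e : G.E // G.r e ∈ G.BH {v : G.V | g v = 0}} | G.s e.1 = w}).Finite :=
    Set.Finite.of_finite_image (by rw [val_image_T2]; exact hA2) (Subtype.val_injective.injOn)
  have hdisj : Disjoint
      (Sum.inl '' {e : {e : G.E // G.r e ∉ {v : G.V | g v = 0}} | G.s e.1 = w})
      (Sum.inr '' {e : {e : G.E // G.r e ∈ G.BH {v : G.V | g v = 0}} | G.s e.1 = w}) := by
    rw [Set.disjoint_left]
    rintro x ⟨a, -, rfl⟩ ⟨b, -, hb⟩
    exact Sum.inl_ne_inr hb.symm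
  rw [Sw_eq hH hw]
  show (∑ᶠ x ∈ ((Sum.inl '' {e : {e : G.E // G.r e ∉ {v : G.V | g v = 0}} | G.s e.1 = w}
        ∪ Sum.inr '' {e : {e : G.E // G.r e ∈ G.BH {v : G.V | g v = 0}} | G.s e.1 = w}) :
        Set ({e : G.E // G.r e ∉ {v : G.V | g v = 0}}
          ⊕ {e : G.E // G.r e ∈ G.BH {v : G.V | g v = 0}})),
      G.gtilde {v : G.V | g v = 0} hH g ((G.quot {v : G.V | g v = 0} hH).r x)) = S G g w
  rw [finsum_mem_union hdisj (hT1.image _) (hT2.image _),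
    finsum_mem_image (Sum.inl_injective.injOn), finsum_mem_image (Sum.inr_injective.injOn)]
  have e1 : (∑ᶠ e ∈ {e : {e : G.E // G.r e ∉ {v : G.V | g v = 0}} | G.s e.1 = w},
      G.gtilde {v : G.V | g v = 0} hH g ((G.quot {v : G.V | g v = 0} hH).r (Sum.inl e)))
      = ∑ᶠ e ∈ {e : G.E | G.s e = w ∧ G.r e ∉ {v : G.V | g v = 0}}, f1 G g e := by
    rw [← val_image_T1 (g := g) (w := w), finsum_mem_image (Subtype.val_injective.injOn)]
    exact finsum_mem_congr rfl (fun e _ => gtilde_inl hH e)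
  have e2 : (∑ᶠ e ∈ {e : {e : G.E // G.r e ∈ G.BH {v : G.V | g v = 0}} | G.s e.1 = w},
      G.gtilde {v : G.V | g v = 0} hH g ((G.quot {v : G.V | g v = 0} hH).r (Sum.inr e)))
      = ∑ᶠ e ∈ {e : G.E | G.s e = w ∧ G.r e ∈ G.BH {v : G.V | g v = 0}}, f2 G g e := by
    rw [← val_image_T2 (g := g) (w := w), finsum_mem_image (Subtype.val_injective.injOn)]
    exact finsum_mem_congr rfl (fun e _ => gtilde_inr hH e)
  rw [e1, e2, S, finsum_mem_eq_finite_toFinset_sum _ hA1, finsum_mem_eq_finite_toFinset_sum _ hA2,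
    finsum_mem_eq_finite_toFinset_sum _ hA1]
  have hsub : hA2.toFinset ⊆ hA1.toFinset :=
    Set.Finite.toFinset_subset_toFinset.mpr (A2_subset_A1 hH)
  calc (∑ e ∈ hA1.toFinset, f1 G g e) + ∑ e ∈ hA2.toFinset, f2 G g e
      = ((∑ e ∈ hA1.toFinset \ hA2.toFinset, f1 G g e) + ∑ e ∈ hA2.toFinset, f1 G g e)
          + ∑ e ∈ hA2.toFinset, f2 G g e := by rw [Finset.sum_sdiff hsub]
    _ = (∑ e ∈ hA1.toFinset \ hA2.toFinset, f1 G g e)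
          + ∑ e ∈ hA2.toFinset, (f1 G g e + f2 G g e) := by
        rw [add_assoc, Finset.sum_add_distrib]
    _ = (∑ e ∈ hA1.toFinset \ hA2.toFinset, g (G.r e))
          + ∑ e ∈ hA2.toFinset, g (G.r e) := by
        congr 1
        · refine Finset.sum_congr rfl (fun e he => ?_)
          rw [Finset.mem_sdiff, hA1.mem_toFinset, hA2.mem_toFinset] at he
          have hre : G.r e ∉ G.BH {v : G.V | g v = 0} := fun h => he.2 ⟨he.1.1, h⟩
          rw [f1, if_neg hre]
        · refine Finset.sum_congr rfl (fun e he => ?_)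
          rw [hA2.mem_toFinset] at he
          rw [f1, f2, if_pos he.2]
          exact add_tsub_cancel_of_le (S_le hg he.2)
    _ = ∑ e ∈ hA1.toFinset, g (G.r e) := Finset.sum_sdiff hsub


theorem key_bound (hg : G.IsGraphTrace g) (hH : G.Hereditary {v : G.V | g v = 0}) {w : G.V}
    (hw : w ∉ {v : G.V | g v = 0}) (hinfG : ({e : G.E | G.s e = w}).Infinite)
    (F : Finset (G.quot {v : G.V | g v = 0} hH).E)
    (hF : ∀ x ∈ F, (G.quot {v : G.V | g v = 0} hH).s x = Sum.inl ⟨w, hw⟩) :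
    (∑ x ∈ F, G.gtilde {v : G.V | g v = 0} hH g ((G.quot {v : G.V | g v = 0} hH).r x))
      ≤ g w := by
  classical
  have hF' : ∀ x ∈ (F : Finset ({e : G.E // G.r e ∉ {v : G.V | g v = 0}}
      ⊕ {e : G.E // G.r e ∈ G.BH {v : G.V | g v = 0}})),
      (G.quot {v : G.V | g v = 0} hH).s x = Sum.inl ⟨w, hw⟩ := hF
  set F' : Finset ({e : G.E // G.r e ∉ {v : G.V | g v = 0}}
      ⊕ {e : G.E // G.r e ∈ G.BH {v : G.V | g v = 0}}) := F with hF'def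
  set E1 : Finset G.E := F'.toLeft.image Subtype.val with hE1def
  set E2 : Finset G.E := F'.toRight.image Subtype.val with hE2def
  have hmem1 : ∀ e ∈ E1, G.s e = w ∧ G.r e ∉ {v : G.V | g v = 0} := by
    intro e he
    rw [hE1def, Finset.mem_image] at he
    obtain ⟨x, hx, rfl⟩ := he
    rw [Finset.mem_toLeft] at hx
    have := hF' _ hx
    simp only [DirGraph.quot, Sum.elim_inl, Sum.inl.injEq, Subtype.mk.injEq] at this
    exact ⟨this, x.2⟩
  have hmem2 : ∀ e ∈ E2, G.s e = w ∧ G.r e ∈ G.BH {v : G.V | g v = 0} := by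
    intro e he
    rw [hE2def, Finset.mem_image] at he
    obtain ⟨x, hx, rfl⟩ := he
    rw [Finset.mem_toRight] at hx
    have := hF' _ hx
    simp only [DirGraph.quot, Sum.elim_inr, Sum.inl.injEq, Subtype.mk.injEq] at this
    exact ⟨this, x.2⟩
  have hgoal : (∑ x ∈ F', G.gtilde {v : G.V | g v = 0} hH g
      ((G.quot {v : G.V | g v = 0} hH).r x)) ≤ g w := by
    rw [← Finset.toLeft_disjSum_toRight (u := F'), Finset.sum_disjSum]
    have hs1 : (∑ e ∈ F'.toLeft, G.gtilde {v : G.V | g v = 0} hH g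
        ((G.quot {v : G.V | g v = 0} hH).r (Sum.inl e))) = ∑ e ∈ E1, f1 G g e := by
      rw [hE1def, Finset.sum_image (fun x _ y _ h => Subtype.val_injective h)]
      exact Finset.sum_congr rfl (fun e _ => gtilde_inl hH e)
    have hs2 : (∑ e ∈ F'.toRight, G.gtilde {v : G.V | g v = 0} hH g
        ((G.quot {v : G.V | g v = 0} hH).r (Sum.inr e))) = ∑ e ∈ E2, f2 G g e := by
      rw [hE2def, Finset.sum_image (fun x _ y _ h => Subtype.val_injective h)]
      exact Finset.sum_congr rfl (fun e _ => gtilde_inr hH e)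
    rw [hs1, hs2]
    calc (∑ e ∈ E1, f1 G g e) + ∑ e ∈ E2, f2 G g e
        = (∑ e ∈ (E1 ∪ E2) ∩ E1, f1 G g e) + ∑ e ∈ (E1 ∪ E2) ∩ E2, f2 G g e := by
          rw [Finset.union_inter_cancel_left, Finset.union_inter_cancel_right]
      _ = (∑ e ∈ E1 ∪ E2, if e ∈ E1 then f1 G g e else 0)
            + ∑ e ∈ E1 ∪ E2, if e ∈ E2 then f2 G g e else 0 := by
          rw [Finset.sum_ite_mem, Finset.sum_ite_mem]
      _ = ∑ e ∈ E1 ∪ E2, ((if e ∈ E1 then f1 G g e else 0)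
            + if e ∈ E2 then f2 G g e else 0) := Finset.sum_add_distrib.symm
      _ ≤ ∑ e ∈ E1 ∪ E2, g (G.r e) := by
          refine Finset.sum_le_sum (fun e he => ?_)
          by_cases h1 : e ∈ E1 <;> by_cases h2 : e ∈ E2 <;> simp only [h1, h2, if_pos, if_neg,
            if_true, if_false, add_zero, zero_add]
          · have hre := (hmem2 e h2).2
            rw [f1, f2, if_pos hre]
            exact le_of_eq (add_tsub_cancel_of_le (S_le hg hre))
          · rw [f1]
            by_cases hre : G.r e ∈ G.BH {v : G.V | g v = 0}
            · rw [if_pos hre]; exact S_le hg hre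
            · rw [if_neg hre]
          · rw [f2]; exact tsub_le_self
          · exact (Finset.notMem_union.mpr ⟨h1, h2⟩ he).elim
      _ ≤ g w := hg.2 w hinfG _ (fun e he => by
          rcases Finset.mem_union.mp he with h | h
          · exact (hmem1 e h).1
          · exact (hmem2 e h).1)
  exact hgoal

end GtildeAux

open scoped ENNReal


/-- For a graph trace `g` on `G` with `H = {v : g v = 0}` (a saturated hereditary set),
the induced function `g̃` is a graph trace on the quotient graph `G_{(H,∅)}` and has the
same norm as `g`. -/
theorem gtilde_isGraphTrace_and_norm_eq (G : DirGraph) (g : G.V → NNReal)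
    (hg : G.IsGraphTrace g) :
    ∃ hH : G.Hereditary {v : G.V | g v = 0},
      (G.quot {v : G.V | g v = 0} hH).IsGraphTrace (G.gtilde {v : G.V | g v = 0} hH g) ∧
        (G.quot {v : G.V | g v = 0} hH).traceNorm (G.gtilde {v : G.V | g v = 0} hH g) =
          G.traceNorm g := by
  classical
  have hH := GtildeAux.hered hg
  refine ⟨hH, ⟨?_, ?_⟩, ?_⟩
  · -- condition (1)
    rintro (⟨w, hw⟩ | v) hfin hne
    · have hA1 : ({e : G.E | G.s e = w ∧ G.r e ∉ {v : G.V | g v = 0}}).Finite :=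
        (GtildeAux.Sw_finite_iff hH hw).mp hfin
      have hA1ne : ({e : G.E | G.s e = w ∧ G.r e ∉ {v : G.V | g v = 0}}).Nonempty := by
        obtain ⟨x, hx⟩ := hne
        rw [GtildeAux.Sw_eq hH hw] at hx
        rcases hx with ⟨e, he, rfl⟩ | ⟨e, he, rfl⟩
        · exact ⟨e.1, he, e.2⟩
        · exact ⟨e.1, he, GtildeAux.BH_not_mem hH e.2⟩
      rw [GtildeAux.key_sum hg hH hw hA1]
      show (if w ∈ G.BH {v : G.V | g v = 0} then GtildeAux.S G g w else g w)
        = GtildeAux.S G g w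
      by_cases hwBH : w ∈ G.BH {v : G.V | g v = 0}
      · rw [if_pos hwBH]
      · rw [if_neg hwBH]
        have hfinG : ({e : G.E | G.s e = w}).Finite := by
          by_contra hinf
          exact hwBH ⟨hinf, hA1, hA1ne⟩
        exact GtildeAux.g_eq_S hg hfinG ⟨hA1ne.choose, hA1ne.choose_spec.1⟩
    · exfalso
      obtain ⟨x, hx⟩ := hne
      simp only [Set.mem_setOf_eq] at hx
      cases x <;> simp [DirGraph.quot] at hx
  · -- condition (2)
    rintro (⟨w, hw⟩ | v) hinf F hF
    · have hA1inf : ¬ ({e : G.E | G.s e = w ∧ G.r e ∉ {v : G.V | g v = 0}}).Finite :=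
        fun h => hinf ((GtildeAux.Sw_finite_iff hH hw).mpr h)
      have hinfG : ({e : G.E | G.s e = w}).Infinite :=
        fun h => hA1inf (h.subset fun e he => he.1)
      have hwBH : w ∉ G.BH {v : G.V | g v = 0} := fun h => hA1inf h.2.1
      have hb := GtildeAux.key_bound hg hH hw hinfG F hF
      show _ ≤ (if w ∈ G.BH {v : G.V | g v = 0} then GtildeAux.S G g w else g w)
      rw [if_neg hwBH]
      exact hb
    · exfalso
      apply hinf
      convert Set.finite_empty
      ext x
      simp only [Set.mem_setOf_eq, Set.mem_empty_iff_false]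
      cases x <;> simp [DirGraph.quot]
  · -- norm equality
    rw [DirGraph.traceNorm, DirGraph.traceNorm]
    have hsplit : (∑' x : ({v : G.V // v ∉ {v : G.V | g v = 0}}
          ⊕ {v : G.V // v ∈ G.BH {v : G.V | g v = 0}}),
          ((G.gtilde {v : G.V | g v = 0} hH g x : ℝ≥0∞)))
        = (∑' a : {v : G.V // v ∉ {v : G.V | g v = 0}},
            (G.gtilde {v : G.V | g v = 0} hH g (Sum.inl a) : ℝ≥0∞))
          + ∑' b : {v : G.V // v ∈ G.BH {v : G.V | g v = 0}},
            (G.gtilde {v : G.V | g v = 0} hH g (Sum.inr b) : ℝ≥0∞) := by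
      rw [← tsum_univ (fun x : ({v : G.V // v ∉ {v : G.V | g v = 0}}
          ⊕ {v : G.V // v ∈ G.BH {v : G.V | g v = 0}}) =>
          ((G.gtilde {v : G.V | g v = 0} hH g x : ℝ≥0∞))), ← Set.range_inl_union_range_inr,
        Summable.tsum_union_disjoint (f := fun x : ({v : G.V // v ∉ {v : G.V | g v = 0}}
            ⊕ {v : G.V // v ∈ G.BH {v : G.V | g v = 0}}) =>
            ((G.gtilde {v : G.V | g v = 0} hH g x : ℝ≥0∞)))
          Set.isCompl_range_inl_range_inr.disjoint ENNReal.summable ENNReal.summable,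
        ← (Equiv.ofInjective _ Sum.inl_injective).tsum_eq,
        ← (Equiv.ofInjective _ Sum.inr_injective).tsum_eq]
      rfl
    refine Eq.trans hsplit ?_
    have h1 : (∑' a : {v : G.V // v ∉ {v : G.V | g v = 0}},
        (G.gtilde {v : G.V | g v = 0} hH g (Sum.inl a) : ℝ≥0∞))
        = ∑' v : G.V, (if v ∈ {u : G.V | g u = 0} then 0
            else if v ∈ G.BH {u : G.V | g u = 0} then (GtildeAux.S G g v : ℝ≥0∞)
            else (g v : ℝ≥0∞)) := by
      refine Eq.trans (tsum_congr (fun a => ?_))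
        (tsum_subtype_eq_of_support_subset (s := {v : G.V | v ∉ {u : G.V | g u = 0}}) ?_)
      · show ((if a.1 ∈ G.BH {u : G.V | g u = 0} then GtildeAux.S G g a.1
            else g a.1 : NNReal) : ℝ≥0∞)
          = if a.1 ∈ {u : G.V | g u = 0} then 0
            else if a.1 ∈ G.BH {u : G.V | g u = 0} then (GtildeAux.S G g a.1 : ℝ≥0∞)
            else (g a.1 : ℝ≥0∞)
        rw [if_neg a.2]
        by_cases h : a.1 ∈ G.BH {u : G.V | g u = 0}
        · rw [if_pos h, if_pos h]
        · rw [if_neg h, if_neg h]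
      · intro v hv
        by_contra hvH
        simp only [Set.mem_setOf_eq, not_not] at hvH
        exact hv (if_pos hvH)
    have h2 : (∑' b : {v : G.V // v ∈ G.BH {v : G.V | g v = 0}},
        (G.gtilde {v : G.V | g v = 0} hH g (Sum.inr b) : ℝ≥0∞))
        = ∑' v : G.V, (if v ∈ G.BH {u : G.V | g u = 0}
            then ((g v - GtildeAux.S G g v : NNReal) : ℝ≥0∞) else 0) := by
      refine Eq.trans (tsum_congr (fun b => ?_))
        (tsum_subtype_eq_of_support_subset (s := G.BH {u : G.V | g u = 0}) ?_)
      · show ((g b.1 - GtildeAux.S G g b.1 : NNReal) : ℝ≥0∞)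
          = if b.1 ∈ G.BH {u : G.V | g u = 0}
            then ((g b.1 - GtildeAux.S G g b.1 : NNReal) : ℝ≥0∞) else 0
        rw [if_pos b.2]
      · intro v hv
        by_contra hvBH
        exact hv (if_neg hvBH)
    rw [h1, h2, ← ENNReal.tsum_add]
    refine tsum_congr (fun v => ?_)
    by_cases hvH : v ∈ {u : G.V | g u = 0}
    · have hvBH : v ∉ G.BH {u : G.V | g u = 0} :=
        fun h => GtildeAux.BH_not_mem hH h hvH
      rw [if_pos hvH, if_neg hvBH, add_zero]
      have hgv : g v = 0 := hvH
      rw [hgv, ENNReal.coe_zero]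
    · rw [if_neg hvH]
      by_cases hvBH : v ∈ G.BH {u : G.V | g u = 0}
      · rw [if_pos hvBH, if_pos hvBH, ENNReal.coe_sub]
        exact add_tsub_cancel_of_le (ENNReal.coe_le_coe.mpr (GtildeAux.S_le hg hvBH))
      · rw [if_neg hvBH, if_neg hvBH, add_zero]
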